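/- Let G = (V, E, w) be an edge-weighted graph and suppose a randomized algorithm, parameterized by a random vector y, outputs a matching M(y). If there exist nonnegative random variables (α_u)_{u∈V} such that (1) for every realization of y, Σ_{u∈V} α_u = Σ_{(u,v)∈M(y)} w_{uv}, and (2) for every edge (u,v) in a fixed maximum-weight matching M*, E_y[α_u + α_v] ≥ r·w_{uv}, then E_y[weight of M(y)] ≥ r·(weight of M*). -/
import Mathlib


open MeasureTheory

/-- Randomized primal–dual lemma. Suppose a randomized algorithm (randomness `ω ∼ μ`)
outputs a matching `M ω` in an edge-weighted graph with nonnegative weights `w`, and there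
are nonnegative (integrable) random variables `α u` such that (1) for every realization,
`∑_u α u = ∑_{p ∈ M ω} w p`, and (2) for every edge `p` of a fixed maximum-weight matching
`Mstar`, `E[α p.1 + α p.2] ≥ r · w p`. Then `E[weight of M] ≥ r · (weight of Mstar)`. -/
theorem stmt_5 {V : Type*} [Fintype V] {Ω : Type*} [MeasurableSpace Ω]
    (μ : Measure Ω) [IsProbabilityMeasure μ]
    (w : V × V → ℝ) (hw : ∀ p, 0 ≤ w p)
    (M : Ω → Finset (V × V))
    (hM : ∀ ω, ∀ p ∈ M ω, ∀ q ∈ M ω, p ≠ q →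
        p.1 ≠ q.1 ∧ p.1 ≠ q.2 ∧ p.2 ≠ q.1 ∧ p.2 ≠ q.2)
    (hMloop : ∀ ω, ∀ p ∈ M ω, p.1 ≠ p.2)
    (α : V → Ω → ℝ) (hα : ∀ u ω, 0 ≤ α u ω) (hint : ∀ u, Integrable (α u) μ)
    (h1 : ∀ ω, ∑ u : V, α u ω = ∑ p ∈ M ω, w p)
    (Mstar : Finset (V × V))
    (hstar : ∀ p ∈ Mstar, ∀ q ∈ Mstar, p ≠ q →
        p.1 ≠ q.1 ∧ p.1 ≠ q.2 ∧ p.2 ≠ q.1 ∧ p.2 ≠ q.2)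
    (hstarloop : ∀ p ∈ Mstar, p.1 ≠ p.2)
    (r : ℝ)
    (h2 : ∀ p ∈ Mstar, r * w p ≤ ∫ ω, (α p.1 ω + α p.2 ω) ∂μ) :
    r * ∑ p ∈ Mstar, w p ≤ ∫ ω, (∑ p ∈ M ω, w p) ∂μ := by
  classical
  set f : V → ℝ := fun u => ∫ ω, α u ω ∂μ with hf
  have hf0 : ∀ u, 0 ≤ f u := fun u => integral_nonneg (fun ω => hα u ω)
  -- RHS equals ∑ u, f u
  have hRHS : ∫ ω, (∑ p ∈ M ω, w p) ∂μ = ∑ u : V, f u := by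
    rw [← integral_finset_sum Finset.univ (fun u _ => hint u)]
    exact integral_congr_ae (Filter.Eventually.of_forall fun ω => (h1 ω).symm)
  rw [hRHS]
  -- step 1
  have step1 : r * ∑ p ∈ Mstar, w p ≤ ∑ p ∈ Mstar, (f p.1 + f p.2) := by
    rw [Finset.mul_sum]
    refine Finset.sum_le_sum fun p hp => ?_
    calc r * w p ≤ ∫ ω, (α p.1 ω + α p.2 ω) ∂μ := h2 p hp
      _ = f p.1 + f p.2 := integral_add (hint p.1) (hint p.2)
  refine step1.trans ?_
  have hinj1 : Set.InjOn Prod.fst (Mstar : Set (V × V)) := by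
    intro p hp q hq h
    by_contra hne
    exact (hstar p hp q hq hne).1 h
  have hinj2 : Set.InjOn Prod.snd (Mstar : Set (V × V)) := by
    intro p hp q hq h
    by_contra hne
    exact (hstar p hp q hq hne).2.2.2 h
  have hdisj : Disjoint (Mstar.image Prod.fst) (Mstar.image Prod.snd) := by
    rw [Finset.disjoint_left]
    rintro u hu1 hu2
    obtain ⟨p, hp, hp1⟩ := Finset.mem_image.mp hu1
    obtain ⟨q, hq, hq2⟩ := Finset.mem_image.mp hu2
    by_cases hpq : p = q
    · exact hstarloop p hp (by rw [hp1, hpq, hq2])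
    · exact (hstar p hp q hq hpq).2.1 (by rw [hp1, hq2])
  calc ∑ p ∈ Mstar, (f p.1 + f p.2)
      = ∑ p ∈ Mstar, f p.1 + ∑ p ∈ Mstar, f p.2 := Finset.sum_add_distrib
    _ = ∑ u ∈ Mstar.image Prod.fst, f u + ∑ u ∈ Mstar.image Prod.snd, f u := by
        rw [Finset.sum_image (fun p hp q hq => hinj1 hp hq),
          Finset.sum_image (fun p hp q hq => hinj2 hp hq)]
    _ = ∑ u ∈ Mstar.image Prod.fst ∪ Mstar.image Prod.snd, f u :=
        (Finset.sum_union hdisj).symm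
    _ ≤ ∑ u : V, f u :=
        Finset.sum_le_sum_of_subset_of_nonneg (Finset.subset_univ _)
          (fun u _ _ => hf0 u)
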